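/- An r-uniform hypergraph with multiplicities H = ([n], E) can be represented as KG^r_{r-1}(S) for some set family S if and only if H is up-monotone. -/
import Mathlib


/-- An `r`-uniform hypergraph with multiplicities `H = ([n], E)` (loop-free) can
be represented as `KG^r_{r-1}(S)` for some family `S` of nonempty sets — i.e.
there is an injection `i ↦ Sᵢ` such that the edges of `H` are exactly the
`(r-1,…,r-1)`-disjoint `r`-multisets (no ground element occurring, with
multiplicity, in all `r` of the chosen sets) — if and only if `H` is up-monotone. -/
theorem stmt8 {n r : ℕ} (hr : 2 ≤ r) (E : Set (Multiset (Fin n)))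
    (hcard : ∀ e ∈ E, Multiset.card e = r)
    (hloop : ∀ e ∈ E, ∃ a ∈ e, ∃ b ∈ e, a ≠ b) :
    (∃ (m : ℕ) (S : Fin n → Finset (Fin m)), Function.Injective S ∧
      (∀ i, (S i).Nonempty) ∧
      ∀ e : Multiset (Fin n), Multiset.card e = r →
        (e ∈ E ↔ ∀ x : Fin m, e.countP (fun i => x ∈ S i) ≤ r - 1)) ↔
    (∀ e ∈ E, ∀ e' : Multiset (Fin n), Multiset.card e' = r →
      (∃ a ∈ e', ∃ b ∈ e', a ≠ b) → e.toFinset ⊆ e'.toFinset → e' ∈ E) := by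
  classical
  constructor
  · rintro ⟨m, S, hinj, hne, hiff⟩ e he e' hcard' hdist hsub
    rw [hiff e' hcard']
    intro x
    by_contra hx
    push_neg at hx
    have hle := Multiset.countP_le_card (fun i => x ∈ S i) e'
    rw [hcard'] at hle
    have heq : e'.countP (fun i => x ∈ S i) = Multiset.card e' := by
      rw [hcard']; omega
    have hall' := Multiset.countP_eq_card.mp heq
    have hall : ∀ i ∈ e, x ∈ S i := fun i hi =>
      hall' i (Multiset.mem_toFinset.mp (hsub (Multiset.mem_toFinset.mpr hi)))
    have h1 := (hiff e (hcard e he)).mp he x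
    have h2 : e.countP (fun i => x ∈ S i) = Multiset.card e :=
      Multiset.countP_eq_card.mpr hall
    rw [hcard e he] at h2
    omega
  · intro hmono
    set m := Fintype.card (Finset (Fin n)) with hm
    set φ : Finset (Fin n) ≃ Fin m := Fintype.equivFin _ with hφ
    set S : Fin n → Finset (Fin m) := fun i =>
      Finset.univ.filter (fun x => i ∈ φ.symm x ∧ ∀ e₀ ∈ E, ¬ e₀.toFinset ⊆ φ.symm x)
      with hS
    have hmem : ∀ (i : Fin n) (x : Fin m),
        x ∈ S i ↔ i ∈ φ.symm x ∧ ∀ e₀ ∈ E, ¬ e₀.toFinset ⊆ φ.symm x := by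
      intro i x; simp [hS]
    have hsing : ∀ i : Fin n, φ {i} ∈ S i := by
      intro i
      rw [hmem]
      refine ⟨by simp, ?_⟩
      intro e₀ he₀ hsub
      obtain ⟨a, ha, b, hb, hab⟩ := hloop e₀ he₀
      have ha' := hsub (Multiset.mem_toFinset.mpr ha)
      have hb' := hsub (Multiset.mem_toFinset.mpr hb)
      simp at ha' hb'
      exact hab (ha'.trans hb'.symm)
    refine ⟨m, S, ?_, ?_, ?_⟩
    · intro i j hij
      have h1 : φ {i} ∈ S j := hij ▸ hsing i
      rw [hmem] at h1
      have := h1.1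
      simp at this
      exact this.symm
    · intro i
      exact ⟨φ {i}, hsing i⟩
    · intro e hce
      constructor
      · intro he x
        by_contra hx
        push_neg at hx
        have hle := Multiset.countP_le_card (fun i => x ∈ S i) e
        rw [hce] at hle
        have heq : e.countP (fun i => x ∈ S i) = Multiset.card e := by
          rw [hce]; omega
        have hall := Multiset.countP_eq_card.mp heq
        have hepos : ∃ i, i ∈ e := by
          rw [← Multiset.card_pos_iff_exists_mem, hce]; omega
        obtain ⟨i, hi⟩ := hepos
        have := ((hmem i x).mp (hall i hi)).2 e he
        refine this ?_
        intro j hj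
        exact ((hmem j x).mp (hall j (Multiset.mem_toFinset.mp hj))).1
      · intro hcond
        -- A := e.toFinset is not "good": some edge's support is inside it
        by_contra hne'
        have hgood : ∀ e₀ ∈ E, ¬ e₀.toFinset ⊆ e.toFinset := by
          by_contra hbad
          push_neg at hbad
          obtain ⟨e₀, he₀, hsub⟩ := hbad
          obtain ⟨a, ha, b, hb, hab⟩ := hloop e₀ he₀
          exact hne' (hmono e₀ he₀ e hce
            ⟨a, Multiset.mem_toFinset.mp (hsub (Multiset.mem_toFinset.mpr ha)),
             b, Multiset.mem_toFinset.mp (hsub (Multiset.mem_toFinset.mpr hb)), hab⟩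
            hsub)
        have hx := hcond (φ e.toFinset)
        have hall : ∀ i ∈ e, (φ e.toFinset) ∈ S i := by
          intro i hi
          rw [hmem]
          constructor
          · simp [Multiset.mem_toFinset.mpr hi]
          · intro e₀ he₀
            simpa using hgood e₀ he₀
        have h2 : e.countP (fun i => (φ e.toFinset) ∈ S i) = Multiset.card e :=
          Multiset.countP_eq_card.mpr hall
        rw [hce] at h2
        omega
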